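/- arXiv:2508.01738 — 2 statements merged into one kernel-verified Lean document; each statement's English description precedes it below -/
import Mathlib

section
/- If K is a probability density with CDF F_K, then the derivative of the smoothed check loss L_h(e;τ) = (ρ_τ * K_h)(e) with respect to e equals Ψ_h(e;τ) = F_K(e/h) − (1−τ), for every e where F_K is continuous. -/
open MeasureTheory

lemma rho_lip {τ : ℝ} (hτ : τ ∈ Set.Ioo (0 : ℝ) 1) (a b : ℝ) :
    |a * (τ - if a < 0 then 1 else 0) - b * (τ - if b < 0 then 1 else 0)| ≤ |a - b| := by
  obtain ⟨h0, h1⟩ := hτ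
  have h2 := le_abs_self (a - b)
  have h3 := neg_abs_le (a - b)
  rcases lt_or_ge a 0 with ha | ha <;> rcases lt_or_ge b 0 with hb | hb <;>
    simp only [if_pos, if_neg, ha, hb, not_lt.2, if_true, if_false] <;>
    rw [abs_le] <;> constructor <;> nlinarith

/-- The derivative of the smoothed check loss `L_h(e;τ) = (ρ_τ * K_h)(e)` with respect to `e`
equals `Ψ_h(e;τ) = F_K(e/h) − (1−τ)`, at every `e` where the kernel CDF `F_K` is continuous
(at `e/h`). -/
theorem smoothed_check_loss_hasDerivAt
    (τ h : ℝ) (hτ : τ ∈ Set.Ioo (0 : ℝ) 1) (hh : 0 < h)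
    (K : ℝ → ℝ) (hK0 : ∀ v, 0 ≤ K v) (hKint : Integrable K)
    (hK1 : ∫ v, K v = 1)
    (hMint : Integrable (fun v => |v| * K v))
    (F_K : ℝ → ℝ) (hF : ∀ t, F_K t = ∫ z in Set.Iic t, K z)
    (e : ℝ) (hcont : ContinuousAt F_K (e / h)) :
    HasDerivAt
      (fun x => ∫ v, ((x - v) * (τ - if x - v < 0 then 1 else 0)) * (h⁻¹ * K (v / h)))
      (F_K (e / h) - (1 - τ)) e := by
  set Kh : ℝ → ℝ := fun v => h⁻¹ * K (v / h) with hKh_def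
  have hKh0 : ∀ v, 0 ≤ Kh v := fun v => mul_nonneg (by positivity) (hK0 _)
  have hKhint : Integrable Kh := (hKint.comp_div hh.ne').const_mul h⁻¹
  have hMKh : Integrable (fun v => |v| * Kh v) := by
    have : Integrable (fun v => |v / h| * K (v / h)) := hMint.comp_div hh.ne'
    refine this.congr (Filter.EventuallyEq.of_eq (funext fun v => ?_))
    rw [hKh_def]
    rw [abs_div, abs_of_pos hh]
    ring
  set F : ℝ → ℝ → ℝ := fun x v => ((x - v) * (τ - if x - v < 0 then 1 else 0)) * Kh v with hFdef
  set F' : ℝ → ℝ := fun v => (τ - if e - v < 0 then 1 else 0) * Kh v with hF'def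
  have hmeas_ite : ∀ x : ℝ, Measurable (fun v : ℝ => if x - v < 0 then (1:ℝ) else 0) := by
    intro x
    exact Measurable.ite (measurableSet_lt (measurable_const.sub measurable_id) measurable_const)
      measurable_const measurable_const
  have hF_meas : ∀ x : ℝ, AEStronglyMeasurable (F x) volume := by
    intro x
    refine AEStronglyMeasurable.mul ?_ hKhint.aestronglyMeasurable
    exact (((measurable_const.sub measurable_id).mul
      (measurable_const.sub (hmeas_ite x))).aestronglyMeasurable)
  have hrho_abs : ∀ u : ℝ, |u * (τ - if u < 0 then 1 else 0)| ≤ |u| := by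
    intro u
    have := rho_lip hτ u 0
    simpa using this
  have hF_int : Integrable (F e) volume := by
    refine Integrable.mono' ((hKhint.const_mul |e|).add hMKh) (hF_meas e) ?_
    filter_upwards with v
    rw [hFdef]
    show |(e - v) * (τ - if e - v < 0 then 1 else 0) * Kh v| ≤ _
    rw [abs_mul, abs_of_nonneg (hKh0 v)]
    have h1 : |(e - v) * (τ - if e - v < 0 then 1 else 0)| ≤ |e| + |v| :=
      le_trans (hrho_abs (e - v)) (abs_sub e v)
    calc |(e - v) * (τ - if e - v < 0 then 1 else 0)| * Kh v ≤ (|e| + |v|) * Kh v :=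
          mul_le_mul_of_nonneg_right h1 (hKh0 v)
      _ = |e| * Kh v + |v| * Kh v := by ring
  have hF'_meas : AEStronglyMeasurable F' volume := by
    refine AEStronglyMeasurable.mul ?_ hKhint.aestronglyMeasurable
    exact (measurable_const.sub (hmeas_ite e)).aestronglyMeasurable
  have h_lip : ∀ᵐ v ∂(volume : Measure ℝ),
      LipschitzOnWith (Real.nnabs (Kh v)) (fun x => F x v) (Metric.ball e 1) := by
    filter_upwards with v
    refine LipschitzWith.lipschitzOnWith ?_
    refine LipschitzWith.of_dist_le_mul fun x y => ?_
    rw [Real.dist_eq, Real.dist_eq, hFdef]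
    simp only
    rw [← sub_mul, abs_mul]
    have hlip := rho_lip hτ (x - v) (y - v)
    have hxy : |x - v - (y - v)| = |x - y| := by ring_nf
    rw [hxy] at hlip
    calc |(x - v) * (τ - if x - v < 0 then 1 else 0) -
            (y - v) * (τ - if y - v < 0 then 1 else 0)| * |Kh v|
        ≤ |x - y| * |Kh v| := mul_le_mul_of_nonneg_right hlip (abs_nonneg _)
      _ = |Kh v| * |x - y| := mul_comm _ _
      _ = (Real.nnabs (Kh v) : ℝ) * |x - y| := by simp
  have h_diff : ∀ᵐ v ∂(volume : Measure ℝ), HasDerivAt (fun x => F x v) (F' v) e := by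
    have hnull : (volume : Measure ℝ) {e} = 0 := measure_singleton e
    filter_upwards [compl_mem_ae_iff.2 hnull] with v hv
    have hve : v ≠ e := by simpa [Set.mem_singleton_iff] using hv
    have hlin : HasDerivAt (fun x => ((x - v) * (τ - if e - v < 0 then 1 else 0)) * Kh v)
        (F' v) e := by
      have h1 : HasDerivAt (fun x : ℝ => x - v) 1 e := (hasDerivAt_id e).sub_const v
      have h2 := (h1.mul_const (τ - if e - v < 0 then 1 else 0)).mul_const (Kh v)
      simpa [hF'def] using h2
    refine hlin.congr_of_eventuallyEq ?_
    rcases lt_or_gt_of_ne hve with hlt | hgt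
    · -- v < e, so e - v > 0 ; near e, x - v > 0
      have hopen : Set.Ioi v ∈ nhds e := Ioi_mem_nhds hlt
      filter_upwards [hopen] with x hx
      have h1 : ¬ (x - v < 0) := by simp at hx; push_neg; linarith
      have h2 : ¬ (e - v < 0) := by push_neg; linarith
      show (x - v) * (τ - if x - v < 0 then 1 else 0) * Kh v = _
      rw [if_neg h1, if_neg h2]
    · -- e < v
      have hopen : Set.Iio v ∈ nhds e := Iio_mem_nhds hgt
      filter_upwards [hopen] with x hx
      have h1 : x - v < 0 := by simp at hx; linarith
      have h2 : e - v < 0 := by linarith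
      show (x - v) * (τ - if x - v < 0 then 1 else 0) * Kh v = _
      rw [if_pos h1, if_pos h2]
  have key := hasDerivAt_integral_of_dominated_loc_of_lip (F := F) (F' := F') (bound := Kh)
    (Metric.ball_mem_nhds e one_pos) (Filter.Eventually.of_forall hF_meas) hF_int hF'_meas h_lip hKhint h_diff
  obtain ⟨hF'_int, hderiv⟩ := key
  -- compute the integral of F'
  have hKh_total : ∫ v, Kh v = 1 := by
    show ∫ v, h⁻¹ * K (v / h) = 1
    rw [MeasureTheory.integral_const_mul, MeasureTheory.Measure.integral_comp_div K h,
      hK1, abs_of_pos hh, smul_eq_mul]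
    field_simp
  have hKh_Iic : ∫ v in Set.Iic e, Kh v = F_K (e / h) := by
    rw [← MeasureTheory.integral_indicator measurableSet_Iic]
    have heq : (Set.Iic e).indicator Kh =
        fun v => h⁻¹ * ((Set.Iic (e / h)).indicator K) (v / h) := by
      funext v
      by_cases hvle : v ≤ e
      · have : v / h ≤ e / h := (div_le_div_iff_of_pos_right hh).2 hvle
        rw [Set.indicator_of_mem (Set.mem_Iic.2 hvle), Set.indicator_of_mem (Set.mem_Iic.2 this)]
      · have hnot : ¬ v / h ≤ e / h := fun hc =>
          hvle ((div_le_div_iff_of_pos_right hh).1 hc)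
        rw [Set.indicator_of_notMem (by simpa using hvle),
          Set.indicator_of_notMem (by simpa using hnot)]
        simp
    rw [heq, MeasureTheory.integral_const_mul, MeasureTheory.Measure.integral_comp_div _ h,
      abs_of_pos hh, hF (e / h), MeasureTheory.integral_indicator measurableSet_Iic,
      smul_eq_mul]
    field_simp
  have hKh_Ioi : ∫ v in Set.Ioi e, Kh v = 1 - F_K (e / h) := by
    have := intervalIntegral.integral_Iic_add_Ioi (b := e) hKhint.integrableOn hKhint.integrableOn
    rw [hKh_total, hKh_Iic] at this
    linarith
  have hF'_eq : F' = fun v => τ * Kh v - (Set.Ioi e).indicator Kh v := by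
    funext v
    show (τ - if e - v < 0 then 1 else 0) * Kh v = _
    by_cases hv : e - v < 0
    · have hmem : v ∈ Set.Ioi e := by simp; linarith
      rw [if_pos hv, Set.indicator_of_mem hmem]
      ring
    · have hmem : v ∉ Set.Ioi e := by simp at hv ⊢; linarith
      rw [if_neg hv, Set.indicator_of_notMem hmem]
      ring
  have hval : ∫ v, F' v = F_K (e / h) - (1 - τ) := by
    rw [hF'_eq]
    rw [MeasureTheory.integral_sub (hKhint.const_mul τ)
      (hKhint.indicator measurableSet_Ioi)]
    rw [MeasureTheory.integral_const_mul, hKh_total,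
      MeasureTheory.integral_indicator measurableSet_Ioi, hKh_Ioi]
    ring
  rw [hval] at hderiv
  exact hderiv
end

section
/- Suppose y ∈ ℝ^n, X is an n×d real matrix of full column rank, and the per-observation loss satisfies L_h(e;τ) ≥ c₁|e| − C₁ with c₁ > 0, C₁ ≥ 0. Then the sum S(β) = Σᵢ L_h(yᵢ − xᵢᵀβ; τ) satisfies S(β) ≥ c₄‖β‖₂ − C₂ for some constants c₄ > 0 and C₂ ≥ 0 independent of β; consequently, for any fixed θ > 0 the improper-uniform-prior posterior ∫_{ℝ^d} exp(−θS(β)) dβ is finite. -/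
open MeasureTheory
open Real

lemma aux_integrable_exp_neg_mul_abs {b : ℝ} (hb : 0 < b) :
    Integrable fun x : ℝ => Real.exp (-(b * |x|)) := by
  have hIoi : IntegrableOn (fun x : ℝ => Real.exp (-(b * |x|))) (Set.Ioi 0) := by
    refine (exp_neg_integrableOn_Ioi 0 hb).congr_fun (fun x hx => ?_) measurableSet_Ioi
    rw [abs_of_pos hx]
    simp only [neg_mul]
  rw [← integrableOn_univ, ← @Set.Iio_union_Ici _ _ (0 : ℝ), integrableOn_union,
    integrableOn_Ici_iff_integrableOn_Ioi]
  refine ⟨?_, hIoi⟩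
  rw [← (Measure.measurePreserving_neg (volume : Measure ℝ)).integrableOn_comp_preimage
      (Homeomorph.neg ℝ).measurableEmbedding]
  simpa [Function.comp_def, abs_neg] using hIoi

lemma aux_integrable_exp_neg_mul_norm (d : ℕ) {b : ℝ} (hb : 0 < b) :
    Integrable fun β : EuclideanSpace ℝ (Fin d) => Real.exp (-(b * ‖β‖)) := by
  rw [← (PiLp.volume_preserving_toLp (Fin d)).integrable_comp_emb
      (MeasurableEquiv.toLp 2 _).measurableEmbedding]
  set c : ℝ := b / (d + 1) with hc
  have hd1 : (0:ℝ) < (d:ℝ) + 1 := by positivity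
  have hcpos : 0 < c := by positivity
  have hbound : Integrable (fun v : Fin d → ℝ => ∏ j, Real.exp (-(c * |v j|))) :=
    Integrable.fintype_prod (fun _ => aux_integrable_exp_neg_mul_abs hcpos)
  refine hbound.mono' ?_ ?_
  · have : Continuous fun v : Fin d → ℝ =>
        Real.exp (-(b * ‖(WithLp.toLp 2 v : EuclideanSpace ℝ (Fin d))‖)) := by
      have h0 : Continuous (WithLp.toLp 2 : (Fin d → ℝ) → EuclideanSpace ℝ (Fin d)) :=
        PiLp.continuous_toLp 2 _
      exact (Continuous.mul continuous_const h0.norm).neg.rexp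
    exact this.aestronglyMeasurable
  · filter_upwards with v
    simp only [Function.comp_apply, Real.norm_eq_abs, abs_exp, ← Real.exp_sum]
    rw [Real.exp_le_exp]
    have hcoord : ∀ j, |v j| ≤ ‖(WithLp.toLp 2 v : EuclideanSpace ℝ (Fin d))‖ := by
      intro j
      rw [EuclideanSpace.norm_eq, ← Real.sqrt_sq_eq_abs]
      apply Real.sqrt_le_sqrt
      have h : ∀ i, ‖(WithLp.toLp 2 v : EuclideanSpace ℝ (Fin d)) i‖ = |v i| :=
        fun i => rfl
      simp_rw [h, sq_abs]
      exact Finset.single_le_sum (fun i _ => sq_nonneg (v i)) (Finset.mem_univ j)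
    set N := ‖(WithLp.toLp 2 v : EuclideanSpace ℝ (Fin d))‖ with hN
    have hsum : ∑ j, |v j| ≤ (d : ℝ) * N := by
      calc ∑ j, |v j| ≤ ∑ _j : Fin d, N := Finset.sum_le_sum (fun j _ => hcoord j)
      _ = (d : ℝ) * N := by simp [Finset.sum_const, nsmul_eq_mul]
    have key : c * ∑ j, |v j| ≤ b * N := by
      have h1 : c * ∑ j, |v j| ≤ c * ((d : ℝ) * N) := mul_le_mul_of_nonneg_left hsum hcpos.le
      have h2 : c * ((d : ℝ) * N) ≤ c * (((d : ℝ) + 1) * N) := by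
        apply mul_le_mul_of_nonneg_left _ hcpos.le
        exact mul_le_mul_of_nonneg_right (by linarith) (norm_nonneg _)
      have h3 : c * (((d : ℝ) + 1) * N) = b * N := by rw [hc]; field_simp
      linarith
    calc -(b * N) ≤ -(c * ∑ j, |v j|) := by linarith
    _ = ∑ j, -(c * |v j|) := by rw [Finset.mul_sum, Finset.sum_neg_distrib]



/-- If `X` has full column rank and the per-observation loss satisfies
`L_h(e;τ) ≥ c₁|e| − C₁`, then `S(β) = Σᵢ L_h(yᵢ − xᵢᵀβ)` satisfies
`S(β) ≥ c₄‖β‖₂ − C₂` for some `c₄ > 0, C₂ ≥ 0`, and consequently for every fixed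
`θ > 0` the improper-uniform-prior posterior `∫ exp(−θS(β)) dβ` is finite. -/
theorem sum_smoothed_loss_growth_and_posterior_integrable (n d : ℕ)
    (y : Fin n → ℝ) (X : Matrix (Fin n) (Fin d) ℝ) (hX : X.rank = d)
    (Lh : ℝ → ℝ) (hLm : Measurable Lh)
    (c₁ C₁ : ℝ) (hc₁ : 0 < c₁) (hC₁ : 0 ≤ C₁)
    (hgrow : ∀ e : ℝ, c₁ * |e| - C₁ ≤ Lh e) :
    ∃ c₄ : ℝ, 0 < c₄ ∧ ∃ C₂ : ℝ, 0 ≤ C₂ ∧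
      (∀ β : EuclideanSpace ℝ (Fin d),
        c₄ * ‖β‖ - C₂ ≤ ∑ i, Lh (y i - ∑ j, X i j * β j)) ∧
      (∀ θ : ℝ, 0 < θ →
        Integrable (fun β : EuclideanSpace ℝ (Fin d) =>
          Real.exp (-θ * ∑ i, Lh (y i - ∑ j, X i j * β j)))) := by
  classical
  -- injectivity of mulVecLin
  have hinj : Function.Injective X.mulVecLin := by
    rw [← LinearMap.ker_eq_bot]
    have h1 := LinearMap.finrank_range_add_finrank_ker X.mulVecLin
    rw [Module.finrank_pi] at h1
    have h2 : Matrix.rank X = Module.finrank ℝ (LinearMap.range X.mulVecLin) := rfl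
    rw [← h2, hX, Fintype.card_fin] at h1
    have h3 : Module.finrank ℝ (LinearMap.ker X.mulVecLin) = 0 := by omega
    exact Submodule.finrank_eq_zero.mp h3
  set L : EuclideanSpace ℝ (Fin d) →ₗ[ℝ] EuclideanSpace ℝ (Fin n) :=
    (WithLp.linearEquiv 2 ℝ (Fin n → ℝ)).symm.toLinearMap ∘ₗ X.mulVecLin ∘ₗ
      (WithLp.linearEquiv 2 ℝ (Fin d → ℝ)).toLinearMap with hL
  have hLapp : ∀ (β : EuclideanSpace ℝ (Fin d)) (i : Fin n),
      L β i = ∑ j, X i j * β j := by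
    intro β i
    simp [hL, Matrix.mulVecLin, Matrix.mulVec, dotProduct]
  have hLinj : Function.Injective L := by
    intro a b hab
    apply (WithLp.linearEquiv 2 ℝ (Fin d → ℝ)).injective
    apply hinj
    have := congrArg (WithLp.linearEquiv 2 ℝ (Fin n → ℝ)) hab
    simpa [hL] using this
  obtain ⟨K, hK0, hK⟩ := L.exists_antilipschitzWith (LinearMap.ker_eq_bot.mpr hLinj)
  have hKpos : (0:ℝ) < (K:ℝ) := hK0
  have hlow : ∀ β : EuclideanSpace ℝ (Fin d), ‖β‖ ≤ (K:ℝ) * ‖L β‖ := by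
    intro β
    have := hK.le_mul_dist β 0
    simpa [map_zero] using this
  set y' : EuclideanSpace ℝ (Fin n) := (WithLp.equiv 2 (Fin n → ℝ)).symm y with hy'
  have hgrowth : ∀ β : EuclideanSpace ℝ (Fin d),
      (c₁ / K) * ‖β‖ - (c₁ * ‖y'‖ + n * C₁) ≤ ∑ i, Lh (y i - ∑ j, X i j * β j) := by
    intro β
    have hsum1 : ∑ i, (c₁ * |y i - ∑ j, X i j * β j| - C₁)
        ≤ ∑ i, Lh (y i - ∑ j, X i j * β j) :=
      Finset.sum_le_sum (fun i _ => hgrow _)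
    have hsum2 : ∑ i, (c₁ * |y i - ∑ j, X i j * β j| - C₁)
        = c₁ * (∑ i, |y i - ∑ j, X i j * β j|) - n * C₁ := by
      rw [Finset.sum_sub_distrib, ← Finset.mul_sum]
      simp [Finset.sum_const, nsmul_eq_mul]
    have hnorm1 : ‖y' - L β‖ ≤ ∑ i, |y i - ∑ j, X i j * β j| := by
      rw [EuclideanSpace.norm_eq]
      have happ : ∀ i, ‖(y' - L β) i‖ = |y i - ∑ j, X i j * β j| := by
        intro i
        have : (y' - L β) i = y i - ∑ j, X i j * β j := by
          simp [hy', ← hLapp β i]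
        rw [this, Real.norm_eq_abs]
      simp_rw [happ]
      have h1 : ∑ i, |y i - ∑ j, X i j * β j| ^ 2
          ≤ (∑ i, |y i - ∑ j, X i j * β j|) ^ 2 :=
        Finset.sum_sq_le_sq_sum_of_nonneg (fun i _ => abs_nonneg _)
      calc √(∑ i, |y i - ∑ j, X i j * β j| ^ 2)
          ≤ √((∑ i, |y i - ∑ j, X i j * β j|) ^ 2) := Real.sqrt_le_sqrt h1
        _ = ∑ i, |y i - ∑ j, X i j * β j| :=
            Real.sqrt_sq (Finset.sum_nonneg (fun i _ => abs_nonneg _))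
    have hnorm2 : ‖L β‖ - ‖y'‖ ≤ ‖y' - L β‖ := by
      rw [norm_sub_rev]
      exact norm_sub_norm_le _ _
    have hnorm3 : ‖β‖ / K ≤ ‖L β‖ := by
      rw [div_le_iff₀ hKpos] at *
      calc ‖β‖ ≤ (K:ℝ) * ‖L β‖ := hlow β
      _ = ‖L β‖ * K := mul_comm _ _
    have hstep : c₁ * (‖β‖ / K) ≤ c₁ * ‖L β‖ := mul_le_mul_of_nonneg_left hnorm3 hc₁.le
    have hc2 : c₁ * (‖L β‖ - ‖y'‖) ≤ c₁ * ‖y' - L β‖ := mul_le_mul_of_nonneg_left hnorm2 hc₁.le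
    have hc3 : c₁ * ‖y' - L β‖ ≤ c₁ * ∑ i, |y i - ∑ j, X i j * β j| :=
      mul_le_mul_of_nonneg_left hnorm1 hc₁.le
    have : c₁ / K * ‖β‖ = c₁ * (‖β‖ / K) := by ring
    rw [this]
    rw [hsum2] at hsum1
    nlinarith [hsum1, hstep, hc2, hc3]
  refine ⟨c₁ / K, by positivity, c₁ * ‖y'‖ + n * C₁, by positivity, hgrowth, ?_⟩
  intro θ hθ
  set C₂ : ℝ := c₁ * ‖y'‖ + n * C₁ with hC₂
  have hb : 0 < θ * (c₁ / K) := by positivity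
  have hint := (aux_integrable_exp_neg_mul_norm d hb).const_mul (Real.exp (θ * C₂))
  refine hint.mono' ?_ ?_
  · have hβj : ∀ j, Measurable fun β : EuclideanSpace ℝ (Fin d) => β j :=
      fun j => (measurable_pi_apply j).comp (MeasurableEquiv.toLp 2 (Fin d → ℝ)).symm.measurable
    have hSin : ∀ i, Measurable fun β : EuclideanSpace ℝ (Fin d) => y i - ∑ j, X i j * β j :=
      fun i => measurable_const.sub
        (Finset.measurable_sum _ (fun j _ => (hβj j).const_mul (X i j)))
    have hS : Measurable fun β : EuclideanSpace ℝ (Fin d) =>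
        ∑ i, Lh (y i - ∑ j, X i j * β j) :=
      Finset.measurable_sum _ (fun i _ => hLm.comp (hSin i))
    exact (Real.measurable_exp.comp (hS.const_mul (-θ))).aestronglyMeasurable
  · filter_upwards with β
    rw [Real.norm_eq_abs, Real.abs_exp, ← Real.exp_add, Real.exp_le_exp]
    have h := hgrowth β
    have h2 : θ * ((c₁ / K) * ‖β‖ - C₂) ≤ θ * ∑ i, Lh (y i - ∑ j, X i j * β j) :=
      mul_le_mul_of_nonneg_left h hθ.le
    nlinarith [h2]
end
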